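/- arXiv:2107.10535 — 2 statements merged into one kernel-verified Lean document; each statement's English description precedes it below -/
import Mathlib

section
/- Let (μ_n) be a sequence of probability measures on ℝ^d such that the convolutions μ_n * N_ϱ (with a fixed Gaussian N_ϱ = N(0, ϱ²I_d), ϱ > 0) have uniformly integrable second moments, i.e. sup_n ∫_{|y| ≥ k} |y|² d(μ_n * N_ϱ)(y) → 0 as k → ∞. Then the sequence (μ_n) itself has uniformly integrable second moments: sup_n ∫_{|x| ≥ k} |x|² dμ_n(x) → 0 as k → ∞. -/
open MeasureTheory

noncomputable def W2sq {E : Type*} [NormedAddCommGroup E] [MeasurableSpace E]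
    (μ ν : Measure E) : ℝ :=
  sInf {r : ℝ | ∃ π : Measure (E × E), π.map Prod.fst = μ ∧ π.map Prod.snd = ν ∧
    r = ∫ p, ‖p.1 - p.2‖ ^ 2 ∂π}

noncomputable def W2 {E : Type*} [NormedAddCommGroup E] [MeasurableSpace E]
    (μ ν : Measure E) : ℝ :=
  Real.sqrt (W2sq μ ν)

noncomputable def mconv {E : Type*} [MeasurableSpace E] [Add E] (μ ν : Measure E) : Measure E :=
  μ.bind fun x => ν.map fun y => x + y

noncomputable def gaussPi (d : ℕ) (ϱ : ℝ) : Measure (EuclideanSpace ℝ (Fin d)) :=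
  (Measure.pi fun _ : Fin d => ProbabilityTheory.gaussianReal 0 (Real.toNNReal (ϱ ^ 2))).map
    (MeasurableEquiv.toLp 2 (Fin d → ℝ))

open ENNReal ProbabilityTheory NNReal

section Aux

lemma ui_lintegral_mconv {E : Type*} [MeasurableSpace E] [AddMonoid E] [MeasurableAdd₂ E]
    (μ ν : Measure E) [SFinite ν] {f : E → ℝ≥0∞} (hf : Measurable f) :
    ∫⁻ y, f y ∂(mconv μ ν) = ∫⁻ x, ∫⁻ g, f (x + g) ∂ν ∂μ := by
  have hker : Measurable fun x : E => ν.map (fun y => x + y) := by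
    refine Measure.measurable_of_measurable_coe _ fun s hs => ?_
    simp_rw [Measure.map_apply (measurable_const_add _) hs]
    have h : ∀ x : E, (fun y => x + y) ⁻¹' s
        = Prod.mk x ⁻¹' ((fun p : E × E => p.1 + p.2) ⁻¹' s) := fun x => rfl
    simp_rw [h]
    exact measurable_measure_prodMk_left (measurable_add hs)
  rw [mconv, Measure.lintegral_bind hker.aemeasurable hf.aemeasurable]
  exact lintegral_congr fun x => lintegral_map hf (measurable_const_add x)

lemma ui_pi_map_eval {ι : Type*} [Fintype ι] {α : ι → Type*} [∀ i, MeasurableSpace (α i)]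
    (m : ∀ i, Measure (α i)) [∀ i, IsProbabilityMeasure (m i)] (i : ι) :
    (Measure.pi m).map (Function.eval i) = m i := by
  classical
  ext s hs
  rw [Measure.map_apply (measurable_pi_apply i) hs, Set.eval_preimage, Measure.pi_pi]
  rw [Finset.prod_eq_single i (fun j _ hj => by simp [Function.update_of_ne hj]) (by simp)]
  simp

instance gaussPi_prob (d : ℕ) (ϱ : ℝ) : IsProbabilityMeasure (gaussPi d ϱ) := by
  rw [gaussPi]
  exact Measure.isProbabilityMeasure_map (MeasurableEquiv.measurable _).aemeasurable

lemma ui_gauss1_moment {v : ℝ≥0} (hv : v ≠ 0) :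
    ∫⁻ t : ℝ, ENNReal.ofReal (t ^ 2) ∂(gaussianReal 0 v) < ∞ := by
  have hvpos : (0:ℝ) < v := by positivity
  rw [gaussianReal_of_var_ne_zero 0 hv]
  rw [lintegral_withDensity_eq_lintegral_mul _ (measurable_gaussianPDF 0 v)
    (by fun_prop : Measurable fun t : ℝ => ENNReal.ofReal (t ^ 2))]
  have hb : (0:ℝ) < (2 * (v:ℝ))⁻¹ := by positivity
  have hint : Integrable (fun t : ℝ => gaussianPDFReal 0 v t * t ^ 2) := by
    have h := (integrable_rpow_mul_exp_neg_mul_sq hb (s := 2) (by norm_num)).const_mul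
      ((Real.sqrt (2 * Real.pi * v))⁻¹)
    refine h.congr (Filter.Eventually.of_forall fun t => ?_)
    simp only [gaussianPDFReal_def]
    have : (t:ℝ) ^ (2:ℝ) = t ^ 2 := by
      rw [show (2:ℝ) = ((2:ℕ):ℝ) by norm_num, Real.rpow_natCast]
    rw [this]
    have harg : -(t - 0) ^ 2 / (2 * (v:ℝ)) = -((2 * (v:ℝ))⁻¹ * t ^ 2) := by
      field_simp
      ring
    rw [harg]
    ring_nf
  calc ∫⁻ t, (gaussianPDF 0 v * fun t => ENNReal.ofReal (t ^ 2)) t ∂volume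
      = ∫⁻ t, ENNReal.ofReal (gaussianPDFReal 0 v t * t ^ 2) ∂volume := by
        refine lintegral_congr fun t => ?_
        simp only [Pi.mul_apply, gaussianPDF]
        rw [← ENNReal.ofReal_mul (gaussianPDFReal_nonneg 0 v t)]
    _ < ∞ := hint.lintegral_lt_top

lemma ui_gaussPi_moment (d : ℕ) {ϱ : ℝ} (hϱ : 0 < ϱ) :
    ∫⁻ g, ENNReal.ofReal (‖g‖ ^ 2) ∂(gaussPi d ϱ) < ∞ := by
  have hv : (Real.toNNReal (ϱ ^ 2)) ≠ 0 := by
    simp [Real.toNNReal_eq_zero, not_le]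
    positivity
  rw [gaussPi, lintegral_map (by fun_prop) (MeasurableEquiv.measurable _)]
  have hnorm : ∀ x : Fin d → ℝ,
      ‖(MeasurableEquiv.toLp 2 (Fin d → ℝ)) x‖ ^ 2 = ∑ i, (x i) ^ 2 := by
    intro x
    rw [MeasurableEquiv.coe_toLp]
    rw [EuclideanSpace.norm_eq]
    rw [Real.sq_sqrt (by positivity)]
    simp [sq_abs]
  calc ∫⁻ x : Fin d → ℝ, ENNReal.ofReal (‖(MeasurableEquiv.toLp 2 (Fin d → ℝ)) x‖ ^ 2)
        ∂(Measure.pi fun _ => gaussianReal 0 (Real.toNNReal (ϱ ^ 2)))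
      = ∫⁻ x : Fin d → ℝ, ∑ i, ENNReal.ofReal ((x i) ^ 2)
        ∂(Measure.pi fun _ => gaussianReal 0 (Real.toNNReal (ϱ ^ 2))) := by
        refine lintegral_congr fun x => ?_
        rw [hnorm x, ENNReal.ofReal_sum_of_nonneg (fun i _ => by positivity)]
    _ = ∑ i : Fin d, ∫⁻ x : Fin d → ℝ, ENNReal.ofReal ((x i) ^ 2)
        ∂(Measure.pi fun _ => gaussianReal 0 (Real.toNNReal (ϱ ^ 2))) := by
        exact lintegral_finset_sum _ (fun i _ => by fun_prop)
    _ < ∞ := by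
        refine ENNReal.sum_lt_top.mpr fun i _ => ?_
        have h : ∫⁻ x : Fin d → ℝ, ENNReal.ofReal ((x i) ^ 2)
            ∂(Measure.pi fun _ => gaussianReal 0 (Real.toNNReal (ϱ ^ 2)))
            = ∫⁻ t : ℝ, ENNReal.ofReal (t ^ 2) ∂(gaussianReal 0 (Real.toNNReal (ϱ ^ 2))) := by
          symm
          conv_lhs => rw [← ui_pi_map_eval (fun _ : Fin d => gaussianReal 0 (Real.toNNReal (ϱ ^ 2))) i]
          rw [lintegral_map (by fun_prop) (measurable_pi_apply i)]
        rw [h]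
        exact ui_gauss1_moment hv

variable {d : ℕ}

local notation "E" => EuclideanSpace ℝ (Fin d)

lemma ui_meas_f : Measurable fun y : E => ENNReal.ofReal (‖y‖ ^ 2) := by fun_prop

lemma ui_measSet (c : ℝ) : MeasurableSet {y : E | c ≤ ‖y‖} :=
  measurableSet_le measurable_const (by fun_prop)

lemma ui_conv_moment_le (μ ν : Measure E) [IsProbabilityMeasure μ] [IsProbabilityMeasure ν] :
    ∫⁻ y, ENNReal.ofReal (‖y‖ ^ 2) ∂(mconv μ ν)
      ≤ 2 * ∫⁻ x, ENNReal.ofReal (‖x‖ ^ 2) ∂μ + 2 * ∫⁻ g, ENNReal.ofReal (‖g‖ ^ 2) ∂ν := by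
  rw [ui_lintegral_mconv μ ν ui_meas_f]
  calc ∫⁻ x, ∫⁻ g, ENNReal.ofReal (‖x + g‖ ^ 2) ∂ν ∂μ
      ≤ ∫⁻ x, ∫⁻ g, (2 * ENNReal.ofReal (‖x‖ ^ 2) + 2 * ENNReal.ofReal (‖g‖ ^ 2)) ∂ν ∂μ := by
        refine lintegral_mono fun x => lintegral_mono fun g => ?_
        have h1 : ‖x + g‖ ^ 2 ≤ 2 * ‖x‖ ^ 2 + 2 * ‖g‖ ^ 2 := by
          have h := norm_add_le x g
          nlinarith [h, norm_nonneg (x + g), norm_nonneg x, norm_nonneg g,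
            sq_nonneg (‖x‖ - ‖g‖)]
        calc ENNReal.ofReal (‖x + g‖ ^ 2) ≤ ENNReal.ofReal (2 * ‖x‖ ^ 2 + 2 * ‖g‖ ^ 2) :=
              ENNReal.ofReal_le_ofReal h1
          _ ≤ 2 * ENNReal.ofReal (‖x‖ ^ 2) + 2 * ENNReal.ofReal (‖g‖ ^ 2) := by
              rw [ENNReal.ofReal_add (by positivity) (by positivity),
                ENNReal.ofReal_mul (by norm_num), ENNReal.ofReal_mul (by norm_num)]
              norm_num
    _ = 2 * ∫⁻ x, ENNReal.ofReal (‖x‖ ^ 2) ∂μ + 2 * ∫⁻ g, ENNReal.ofReal (‖g‖ ^ 2) ∂ν := by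
        have h : ∀ x : E, ∫⁻ g, (2 * ENNReal.ofReal (‖x‖ ^ 2) + 2 * ENNReal.ofReal (‖g‖ ^ 2)) ∂ν
            = 2 * ENNReal.ofReal (‖x‖ ^ 2) + 2 * ∫⁻ g, ENNReal.ofReal (‖g‖ ^ 2) ∂ν := by
          intro x
          rw [lintegral_add_left measurable_const, lintegral_const, measure_univ, mul_one,
            lintegral_const_mul 2 ui_meas_f]
        simp_rw [h]
        rw [lintegral_add_right _ measurable_const, lintegral_const, measure_univ, mul_one,
          lintegral_const_mul 2 ui_meas_f]

lemma ui_tail_key (μ ν : Measure E) [IsProbabilityMeasure μ] [IsProbabilityMeasure ν]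
    {c0 : ℝ} (hc0 : 0 ≤ c0) (hνB : (2:ℝ≥0∞)⁻¹ ≤ ν {g : E | ‖g‖ ≤ c0})
    {k : ℝ} (hk : 2 * c0 ≤ k) :
    ∫⁻ x in {x : E | k ≤ ‖x‖}, ENNReal.ofReal (‖x‖ ^ 2) ∂μ
      ≤ 8 * ∫⁻ y in {y : E | k / 2 ≤ ‖y‖}, ENNReal.ofReal (‖y‖ ^ 2) ∂(mconv μ ν) := by
  set S : Set E := {y : E | k / 2 ≤ ‖y‖} with hSdef
  have hS : MeasurableSet S := ui_measSet _
  set F : E → ℝ≥0∞ := S.indicator fun y => ENNReal.ofReal (‖y‖ ^ 2) with hFdef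
  have hF : Measurable F := ui_meas_f.indicator hS
  have hinner : Measurable fun x : E => ∫⁻ g, F (x + g) ∂ν := by
    apply Measurable.lintegral_prod_right (f := fun x g => F (x + g))
    exact hF.comp measurable_add
  have hpoint : ∀ x ∈ {x : E | k ≤ ‖x‖},
      ENNReal.ofReal (‖x‖ ^ 2) ≤ 8 * ∫⁻ g, F (x + g) ∂ν := by
    intro x hx
    simp only [Set.mem_setOf_eq] at hx
    have hxk : (0:ℝ) ≤ k := le_trans (by positivity) hk
    have hstep : ∀ g ∈ {g : E | ‖g‖ ≤ c0}, ENNReal.ofReal (‖x‖ ^ 2 / 4) ≤ F (x + g) := by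
      intro g hg
      simp only [Set.mem_setOf_eq] at hg
      have h1 : ‖x‖ / 2 ≤ ‖x + g‖ := by
        have h2 : ‖x‖ ≤ ‖x + g‖ + ‖g‖ := by
          have h3 := norm_add_le (x + g) (-g)
          simpa using h3
        linarith
      have hmem : x + g ∈ S := by
        simp only [hSdef, Set.mem_setOf_eq]
        nlinarith
      rw [hFdef, Set.indicator_of_mem hmem]
      refine ENNReal.ofReal_le_ofReal ?_
      nlinarith [norm_nonneg (x + g), norm_nonneg x]
    calc ENNReal.ofReal (‖x‖ ^ 2)
        = 8 * (ENNReal.ofReal (‖x‖ ^ 2 / 4) * 2⁻¹) := by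
          rw [mul_comm (ENNReal.ofReal (‖x‖ ^ 2 / 4)) 2⁻¹, ← mul_assoc,
            show (8:ℝ≥0∞) * 2⁻¹ = 4 by
              rw [show (8:ℝ≥0∞) = 4 * 2 by norm_num, mul_assoc,
                ENNReal.mul_inv_cancel two_ne_zero ENNReal.ofNat_ne_top, mul_one],
            show (4:ℝ≥0∞) = ENNReal.ofReal 4 by norm_num,
            ← ENNReal.ofReal_mul (by norm_num)]
          congr 1
          ring
      _ ≤ 8 * ∫⁻ g, F (x + g) ∂ν := by
          gcongr
          calc ENNReal.ofReal (‖x‖ ^ 2 / 4) * 2⁻¹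
              ≤ ENNReal.ofReal (‖x‖ ^ 2 / 4) * ν {g : E | ‖g‖ ≤ c0} := by gcongr
            _ = ∫⁻ g in {g : E | ‖g‖ ≤ c0}, ENNReal.ofReal (‖x‖ ^ 2 / 4) ∂ν := by
                rw [setLIntegral_const]
            _ ≤ ∫⁻ g in {g : E | ‖g‖ ≤ c0}, F (x + g) ∂ν :=
                setLIntegral_mono (hF.comp (measurable_const_add x)) hstep
            _ ≤ ∫⁻ g, F (x + g) ∂ν := setLIntegral_le_lintegral _ _
  calc ∫⁻ x in {x : E | k ≤ ‖x‖}, ENNReal.ofReal (‖x‖ ^ 2) ∂μ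
      ≤ ∫⁻ x in {x : E | k ≤ ‖x‖}, 8 * ∫⁻ g, F (x + g) ∂ν ∂μ :=
        setLIntegral_mono (hinner.const_mul 8) hpoint
    _ ≤ ∫⁻ x, 8 * ∫⁻ g, F (x + g) ∂ν ∂μ := setLIntegral_le_lintegral _ _
    _ = 8 * ∫⁻ x, ∫⁻ g, F (x + g) ∂ν ∂μ := lintegral_const_mul 8 hinner
    _ = 8 * ∫⁻ y, F y ∂(mconv μ ν) := by rw [ui_lintegral_mconv μ ν hF]
    _ = 8 * ∫⁻ y in S, ENNReal.ofReal (‖y‖ ^ 2) ∂(mconv μ ν) := by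
        rw [hFdef, lintegral_indicator hS]

lemma ui_mconv_prob {Ω : Type*} [MeasurableSpace Ω] [AddMonoid Ω] [MeasurableAdd₂ Ω]
    (μ ν : Measure Ω) [IsProbabilityMeasure μ] [IsProbabilityMeasure ν] [SFinite ν] :
    IsProbabilityMeasure (mconv μ ν) := by
  constructor
  rw [← lintegral_one, ui_lintegral_mconv μ ν measurable_const]
  simp [lintegral_one, measure_univ]

lemma ui_compl_le (μ : Measure E) [IsProbabilityMeasure μ] (c : ℝ) :
    ∫⁻ x in {x : E | c ≤ ‖x‖}ᶜ, ENNReal.ofReal (‖x‖ ^ 2) ∂μ ≤ ENNReal.ofReal (c ^ 2) := by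
  calc ∫⁻ x in {x : E | c ≤ ‖x‖}ᶜ, ENNReal.ofReal (‖x‖ ^ 2) ∂μ
      ≤ ∫⁻ _ in {x : E | c ≤ ‖x‖}ᶜ, ENNReal.ofReal (c ^ 2) ∂μ := by
        refine setLIntegral_mono measurable_const fun x hx => ?_
        simp only [Set.mem_compl_iff, Set.mem_setOf_eq, not_le] at hx
        exact ENNReal.ofReal_le_ofReal (by nlinarith [norm_nonneg x])
    _ = ENNReal.ofReal (c ^ 2) * μ {x : E | c ≤ ‖x‖}ᶜ := setLIntegral_const _ _
    _ ≤ ENNReal.ofReal (c ^ 2) * 1 := by gcongr; exact prob_le_one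
    _ = ENNReal.ofReal (c ^ 2) := mul_one _

lemma ui_tail_toReal (μ : Measure E) (c : ℝ) :
    ∫ x in {x : E | c ≤ ‖x‖}, ‖x‖ ^ 2 ∂μ
      = (∫⁻ x in {x : E | c ≤ ‖x‖}, ENNReal.ofReal (‖x‖ ^ 2) ∂μ).toReal := by
  rw [integral_eq_lintegral_of_nonneg_ae (Filter.Eventually.of_forall fun x => by positivity)
    ((by fun_prop : Continuous fun x : E => ‖x‖ ^ 2).aestronglyMeasurable)]

lemma ui_exists_c0 (ν : Measure E) [IsProbabilityMeasure ν] :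
    ∃ c0 : ℕ, 1 ≤ c0 ∧ (2:ℝ≥0∞)⁻¹ ≤ ν {g : E | ‖g‖ ≤ (c0:ℝ)} := by
  have hmono : Monotone fun c : ℕ => {g : E | ‖g‖ ≤ (c:ℝ)} := by
    intro a b hab g hg
    simp only [Set.mem_setOf_eq] at hg ⊢
    exact le_trans hg (by exact_mod_cast hab)
  have hU : ⋃ c : ℕ, {g : E | ‖g‖ ≤ (c:ℝ)} = Set.univ := by
    ext g
    simp only [Set.mem_iUnion, Set.mem_setOf_eq, Set.mem_univ, iff_true]
    exact exists_nat_ge ‖g‖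
  have ht := tendsto_measure_iUnion_atTop (μ := ν) hmono
  rw [hU, measure_univ] at ht
  have hev : ∀ᶠ c : ℕ in Filter.atTop, (2:ℝ≥0∞)⁻¹ < ν {g : E | ‖g‖ ≤ (c:ℝ)} :=
    ht.eventually (eventually_gt_nhds (ENNReal.inv_lt_one.mpr one_lt_two))
  obtain ⟨c0, hc1, hc2⟩ := (Filter.eventually_ge_atTop 1).and hev |>.exists
  exact ⟨c0, hc1, hc2.le⟩

end Aux

/-- Uniform integrability of second moments transfers from the Gaussian-smoothed
measures back to the original sequence. -/
theorem stmt_2 {d : ℕ} (ϱ : ℝ) (hϱ : 0 < ϱ)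
    (μ : ℕ → Measure (EuclideanSpace ℝ (Fin d)))
    (hprob : ∀ n, IsProbabilityMeasure (μ n))
    (hUI : Filter.Tendsto
      (fun k : ℕ => ⨆ n : ℕ,
        ∫ y in {y : EuclideanSpace ℝ (Fin d) | (k : ℝ) ≤ ‖y‖}, ‖y‖ ^ 2 ∂(mconv (μ n) (gaussPi d ϱ)))
      Filter.atTop (nhds 0)) :
    Filter.Tendsto
      (fun k : ℕ => ⨆ n : ℕ,
        ∫ x in {x : EuclideanSpace ℝ (Fin d) | (k : ℝ) ≤ ‖x‖}, ‖x‖ ^ 2 ∂(μ n))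
      Filter.atTop (nhds 0) := by
  classical
  haveI := hprob
  set ν := gaussPi d ϱ with hν
  set G : ℝ≥0∞ := ∫⁻ g, ENNReal.ofReal (‖g‖ ^ 2) ∂ν with hGdef
  have hG : G < ⊤ := ui_gaussPi_moment d hϱ
  obtain ⟨c0, hc0ge, hνB⟩ := ui_exists_c0 ν
  have hc0R : (0:ℝ) ≤ (c0:ℝ) := Nat.cast_nonneg _
  set L : ℕ → ℝ → ℝ≥0∞ := fun n c =>
    ∫⁻ x in {x : EuclideanSpace ℝ (Fin d) | c ≤ ‖x‖}, ENNReal.ofReal (‖x‖ ^ 2) ∂(μ n) with hLdef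
  set M : ℕ → ℝ → ℝ≥0∞ := fun n c =>
    ∫⁻ y in {y : EuclideanSpace ℝ (Fin d) | c ≤ ‖y‖}, ENNReal.ofReal (‖y‖ ^ 2)
      ∂(mconv (μ n) ν) with hMdef
  set A : ℕ → ℝ≥0∞ := fun n =>
    ∫⁻ x, ENNReal.ofReal (‖x‖ ^ 2) ∂(μ n) with hAdef
  -- basic facts
  have hsplitL : ∀ n (c : ℝ), A n = L n c + ∫⁻ x in {x : EuclideanSpace ℝ (Fin d) | c ≤ ‖x‖}ᶜ,
      ENNReal.ofReal (‖x‖ ^ 2) ∂(μ n) := by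
    intro n c
    rw [hAdef, hLdef, lintegral_add_compl _ (ui_measSet c)]
  have hsplitM : ∀ n (c : ℝ), (∫⁻ y, ENNReal.ofReal (‖y‖ ^ 2) ∂(mconv (μ n) ν))
      = M n c + ∫⁻ y in {y : EuclideanSpace ℝ (Fin d) | c ≤ ‖y‖}ᶜ,
        ENNReal.ofReal (‖y‖ ^ 2) ∂(mconv (μ n) ν) := by
    intro n c
    rw [hMdef, lintegral_add_compl _ (ui_measSet c)]
  -- if A n = ⊤ then M n c = ⊤ for any c ≥ c0
  have hAtopM : ∀ n (c : ℝ), (c0:ℝ) ≤ c → A n = ⊤ → M n c = ⊤ := by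
    intro n c hcge hAtop
    have hL2 : L n (2 * (c0:ℝ)) = ⊤ := by
      by_contra h
      have := hsplitL n (2 * (c0:ℝ))
      rw [hAtop] at this
      have hcompl := ui_compl_le (μ n) (2 * (c0:ℝ))
      exact (ENNReal.add_lt_top.mpr ⟨lt_top_iff_ne_top.mpr h,
        lt_of_le_of_lt hcompl ENNReal.ofReal_lt_top⟩).ne this.symm
    have hMc0 : M n (c0:ℝ) = ⊤ := by
      have hkey : L n (2 * (c0:ℝ)) ≤ 8 * M n ((2 * (c0:ℝ)) / 2) :=
        ui_tail_key (μ n) ν hc0R hνB (k := 2 * (c0:ℝ)) le_rfl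
      rw [show (2 * (c0:ℝ)) / 2 = (c0:ℝ) by ring] at hkey
      by_contra h
      rw [hL2] at hkey
      exact (ENNReal.mul_lt_top (by norm_num) (lt_top_iff_ne_top.mpr h)).ne
        (top_le_iff.mp hkey)
    have htot : (∫⁻ y, ENNReal.ofReal (‖y‖ ^ 2) ∂(mconv (μ n) ν)) = ⊤ := by
      have h1 : M n (c0:ℝ) ≤ ∫⁻ y, ENNReal.ofReal (‖y‖ ^ 2) ∂(mconv (μ n) ν) :=
        setLIntegral_le_lintegral _ _
    -- mconv is a probability measure? not needed
      exact top_le_iff.mp (hMc0 ▸ h1)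
    by_contra h
    haveI : IsProbabilityMeasure (mconv (μ n) ν) := ui_mconv_prob _ _
    have hsplit := hsplitM n c
    rw [htot] at hsplit
    have hcompl := ui_compl_le (mconv (μ n) ν) c
    exact (ENNReal.add_lt_top.mpr ⟨lt_top_iff_ne_top.mpr h,
      lt_of_le_of_lt hcompl ENNReal.ofReal_lt_top⟩).ne hsplit.symm
  have hMle : ∀ n, (∫⁻ y, ENNReal.ofReal (‖y‖ ^ 2) ∂(mconv (μ n) ν)) ≤ 2 * A n + 2 * G :=
    fun n => ui_conv_moment_le (μ n) ν
  rw [Metric.tendsto_atTop] at hUI ⊢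
  intro ε hε
  obtain ⟨K1, hK1⟩ := hUI (ε / 16) (by positivity)
  refine ⟨max (2 * K1) (2 * c0 + 2), fun k hk => ?_⟩
  have hk1 : 2 * K1 ≤ k := le_trans (le_max_left _ _) hk
  have hk2 : 2 * c0 + 2 ≤ k := le_trans (le_max_right _ _) hk
  set m := k / 2 with hmdef
  have hmK1 : K1 ≤ m := (Nat.le_div_iff_mul_le (by norm_num)).mpr (by omega)
  have hmc0 : (c0:ℝ) ≤ (m:ℝ) := by
    have h : c0 ≤ m := (Nat.le_div_iff_mul_le (by norm_num)).mpr (by omega)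
    exact_mod_cast h
  have hmk2 : (m:ℝ) ≤ (k:ℝ) / 2 := by
    have h := Nat.cast_div_le (α := ℝ) (m := k) (n := 2)
    simpa using h
  have hk2c0 : 2 * (c0:ℝ) ≤ (k:ℝ) := by
    have h : 2 * c0 ≤ k := by omega
    exact_mod_cast h
  have hTnn : ∀ n, 0 ≤ ∫ x in {x : EuclideanSpace ℝ (Fin d) | (k:ℝ) ≤ ‖x‖}, ‖x‖ ^ 2 ∂(μ n) :=
    fun n => integral_nonneg fun x => by positivity
  rw [Real.dist_eq, sub_zero, abs_of_nonneg (Real.iSup_nonneg hTnn)]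
  have hmain : (⨆ n, ∫ x in {x : EuclideanSpace ℝ (Fin d) | (k:ℝ) ≤ ‖x‖}, ‖x‖ ^ 2 ∂(μ n))
      ≤ ε / 2 := by
    by_cases hbdd : BddAbove (Set.range fun n =>
        ∫ x in {x : EuclideanSpace ℝ (Fin d) | (k:ℝ) ≤ ‖x‖}, ‖x‖ ^ 2 ∂(μ n))
    · obtain ⟨B, hB⟩ := hbdd
      have hBle : ∀ n, ∫ x in {x : EuclideanSpace ℝ (Fin d) | (k:ℝ) ≤ ‖x‖}, ‖x‖ ^ 2 ∂(μ n) ≤ B :=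
        fun n => hB (Set.mem_range_self n)
      have hB0 : 0 ≤ B := le_trans (hTnn 0) (hBle 0)
      have hSbd : ∀ n, ∫ y in {y : EuclideanSpace ℝ (Fin d) | (m:ℝ) ≤ ‖y‖}, ‖y‖ ^ 2
          ∂(mconv (μ n) ν) ≤ 2 * (B + (k:ℝ) ^ 2) + 2 * G.toReal := by
        intro n
        rw [ui_tail_toReal]
        show (M n (m:ℝ)).toReal ≤ 2 * (B + (k:ℝ) ^ 2) + 2 * G.toReal
        by_cases hA : A n = ⊤
        · rw [hAtopM n (m:ℝ) hmc0 hA, ENNReal.toReal_top]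
          have hGnn : 0 ≤ G.toReal := ENNReal.toReal_nonneg
          positivity
        · have hAlt : A n < ⊤ := lt_top_iff_ne_top.mpr hA
          have hMlt : M n (m:ℝ) ≤ 2 * A n + 2 * G :=
            le_trans (setLIntegral_le_lintegral _ _) (hMle n)
          have h2A : (2:ℝ≥0∞) * A n ≠ ⊤ := (ENNReal.mul_lt_top (by norm_num) hAlt).ne
          have h2G : (2:ℝ≥0∞) * G ≠ ⊤ := (ENNReal.mul_lt_top (by norm_num) hG).ne
          have hfin : (2:ℝ≥0∞) * A n + 2 * G ≠ ⊤ := by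
            simp [ENNReal.add_eq_top, h2A, h2G]
          calc (M n (m:ℝ)).toReal ≤ ((2:ℝ≥0∞) * A n + 2 * G).toReal :=
                ENNReal.toReal_mono hfin hMlt
            _ = 2 * (A n).toReal + 2 * G.toReal := by
                rw [ENNReal.toReal_add h2A h2G, ENNReal.toReal_mul, ENNReal.toReal_mul]
                norm_num
            _ ≤ 2 * (B + (k:ℝ) ^ 2) + 2 * G.toReal := by
                have hsplit := hsplitL n (k:ℝ)
                have hcompl := ui_compl_le (μ n) (k:ℝ)
                have hLne : L n (k:ℝ) ≠ ⊤ := by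
                  intro hLt
                  rw [hsplit, hLt, top_add] at hA
                  exact hA rfl
                have hcomplne : (∫⁻ x in {x : EuclideanSpace ℝ (Fin d) | (k:ℝ) ≤ ‖x‖}ᶜ,
                    ENNReal.ofReal (‖x‖ ^ 2) ∂(μ n)) ≠ ⊤ :=
                  (lt_of_le_of_lt hcompl ENNReal.ofReal_lt_top).ne
                have hAtr : (A n).toReal ≤ B + (k:ℝ) ^ 2 := by
                  have h1 : (A n).toReal = (L n (k:ℝ)).toReal
                      + (∫⁻ x in {x : EuclideanSpace ℝ (Fin d) | (k:ℝ) ≤ ‖x‖}ᶜ,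
                        ENNReal.ofReal (‖x‖ ^ 2) ∂(μ n)).toReal := by
                    rw [hsplit, ENNReal.toReal_add hLne hcomplne]
                  have h2 : (∫⁻ x in {x : EuclideanSpace ℝ (Fin d) | (k:ℝ) ≤ ‖x‖}ᶜ,
                      ENNReal.ofReal (‖x‖ ^ 2) ∂(μ n)).toReal ≤ (k:ℝ) ^ 2 := by
                    refine le_trans (ENNReal.toReal_mono ENNReal.ofReal_ne_top hcompl) ?_
                    rw [ENNReal.toReal_ofReal (by positivity)]
                  have h3 : (L n (k:ℝ)).toReal ≤ B := by
                    have h4 := hBle n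
                    rw [ui_tail_toReal] at h4
                    exact h4
                  linarith
                linarith
      have hSbdd : BddAbove (Set.range fun n =>
          ∫ y in {y : EuclideanSpace ℝ (Fin d) | (m:ℝ) ≤ ‖y‖}, ‖y‖ ^ 2 ∂(mconv (μ n) ν)) := by
        refine ⟨2 * (B + (k:ℝ) ^ 2) + 2 * G.toReal, fun y hy => ?_⟩
        obtain ⟨n, rfl⟩ := hy
        exact hSbd n
      have hSsup : (⨆ n, ∫ y in {y : EuclideanSpace ℝ (Fin d) | (m:ℝ) ≤ ‖y‖}, ‖y‖ ^ 2
          ∂(mconv (μ n) ν)) < ε / 16 := by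
        have h := hK1 m hmK1
        rw [Real.dist_eq, sub_zero] at h
        exact lt_of_le_of_lt (le_abs_self _) h
      refine Real.iSup_le (fun n => ?_) (by positivity)
      rw [ui_tail_toReal]
      show (L n (k:ℝ)).toReal ≤ ε / 2
      by_cases hLt : L n (k:ℝ) = ⊤
      · rw [hLt, ENNReal.toReal_top]
        positivity
      · have hAne : A n ≠ ⊤ := by
          intro hA
          have hsplit := hsplitL n (k:ℝ)
          rw [hA] at hsplit
          have hcompl := ui_compl_le (μ n) (k:ℝ)
          exact (ENNReal.add_lt_top.mpr ⟨lt_top_iff_ne_top.mpr hLt,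
            lt_of_le_of_lt hcompl ENNReal.ofReal_lt_top⟩).ne hsplit.symm
        have hMfin : M n (m:ℝ) ≠ ⊤ := by
          refine ((le_trans (setLIntegral_le_lintegral _ _) (hMle n)).trans_lt ?_).ne
          exact ENNReal.add_lt_top.mpr ⟨ENNReal.mul_lt_top (by norm_num)
            (lt_top_iff_ne_top.mpr hAne), ENNReal.mul_lt_top (by norm_num) hG⟩
        have hchain : L n (k:ℝ) ≤ 8 * M n (m:ℝ) := by
          have h1 : L n (k:ℝ) ≤ 8 * M n ((k:ℝ) / 2) := ui_tail_key (μ n) ν hc0R hνB hk2c0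
          refine le_trans h1 ?_
          gcongr
          exact lintegral_mono_set (fun y hy => le_trans hmk2 hy)
        calc (L n (k:ℝ)).toReal ≤ (8 * M n (m:ℝ)).toReal :=
              ENNReal.toReal_mono (ENNReal.mul_ne_top (by norm_num) hMfin) hchain
          _ = 8 * (M n (m:ℝ)).toReal := by rw [ENNReal.toReal_mul]; norm_num
          _ ≤ 8 * (⨆ n', ∫ y in {y : EuclideanSpace ℝ (Fin d) | (m:ℝ) ≤ ‖y‖}, ‖y‖ ^ 2
              ∂(mconv (μ n') ν)) := by
              have heq : (M n (m:ℝ)).toReal = ∫ y in {y : EuclideanSpace ℝ (Fin d)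
                  | (m:ℝ) ≤ ‖y‖}, ‖y‖ ^ 2 ∂(mconv (μ n) ν) := (ui_tail_toReal _ _).symm
              rw [heq]
              exact mul_le_mul_of_nonneg_left (le_ciSup hSbdd n) (by norm_num)
          _ ≤ 8 * (ε / 16) := mul_le_mul_of_nonneg_left hSsup.le (by norm_num)
          _ = ε / 2 := by ring
    · rw [Real.iSup_of_not_bddAbove hbdd]
      positivity
  linarith
end

section
/- Let μ, ν be probability measures on ℝ with finite second moment, with cumulative distribution functions F_μ and F_ν. Then W₂(μ,ν)² ≤ 4 ∫_{-∞}^{+∞} |x| · |F_μ(x) − F_ν(x)| dx. -/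
open MeasureTheory

section Aux

open Set Filter ProbabilityTheory
open scoped Topology ENNReal

/-- Quantile function (generalized left-continuous inverse of the cdf). -/
noncomputable def Qf (μ : Measure ℝ) (t : ℝ) : ℝ := sInf {x | t ≤ cdf μ x}

variable (μ : Measure ℝ) [IsProbabilityMeasure μ]

omit [IsProbabilityMeasure μ] in
lemma Qf_setNE {t : ℝ} (ht : t < 1) : {x | t ≤ cdf μ x}.Nonempty := by
  have h := tendsto_cdf_atTop μ
  have : ∀ᶠ x in atTop, t < cdf μ x := h.eventually_const_lt ht
  obtain ⟨x, hx⟩ := this.exists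
  exact ⟨x, hx.le⟩

omit [IsProbabilityMeasure μ] in
lemma Qf_setBdd {t : ℝ} (ht : 0 < t) : BddBelow {x | t ≤ cdf μ x} := by
  have h := tendsto_cdf_atBot μ
  have : ∀ᶠ x in atBot, cdf μ x < t := h.eventually_lt_const ht
  obtain ⟨x₀, hx₀⟩ := this.exists
  refine ⟨x₀, fun y hy => ?_⟩
  by_contra hlt
  push_neg at hlt
  exact absurd (le_trans hy (monotone_cdf μ hlt.le)) (not_le.2 hx₀)

omit [IsProbabilityMeasure μ] in
lemma Qf_le_iff {t x : ℝ} (ht : t ∈ Ioo 0 1) : Qf μ t ≤ x ↔ t ≤ cdf μ x := by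
  constructor
  · intro h
    have hne := Qf_setNE μ ht.2
    have key : ∀ y, x < y → t ≤ cdf μ y := by
      intro y hy
      obtain ⟨z, hz, hzy⟩ := exists_lt_of_csInf_lt hne (lt_of_le_of_lt h hy)
      exact hz.trans (monotone_cdf μ hzy.le)
    have hrc : Tendsto (cdf μ) (𝓝[>] x) (𝓝 (cdf μ x)) :=
      ((cdf μ).right_continuous x).tendsto.mono_left (nhdsWithin_mono x Ioi_subset_Ici_self)
    exact ge_of_tendsto hrc (eventually_nhdsWithin_of_forall (fun y hy => key y hy))
  · intro h
    exact csInf_le (Qf_setBdd μ ht.1) h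

omit [IsProbabilityMeasure μ] in
lemma monotoneOn_Qf : MonotoneOn (Qf μ) (Ioo 0 1) := by
  intro a ha b hb hab
  exact le_csInf (Qf_setNE μ hb.2) fun x hx =>
    csInf_le (Qf_setBdd μ ha.1) (le_trans hab hx)

omit [IsProbabilityMeasure μ] in
lemma aemeasurable_Qf : AEMeasurable (Qf μ) (volume.restrict (Ioo 0 1)) :=
  aemeasurable_restrict_of_monotoneOn measurableSet_Ioo (monotoneOn_Qf μ)

lemma vol_Iic_inter {c : ℝ} (h1 : c ≤ 1) :
    volume (Iic c ∩ Ioo 0 1) = ENNReal.ofReal c := by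
  apply le_antisymm
  · calc volume (Iic c ∩ Ioo 0 1) ≤ volume (Ioc 0 c) := by
          apply measure_mono; rintro t ⟨h1t, h2t, _⟩; exact ⟨h2t, h1t⟩
      _ = ENNReal.ofReal c := by rw [Real.volume_Ioc, sub_zero]
  · calc ENNReal.ofReal c = volume (Ioo 0 c) := by rw [Real.volume_Ioo, sub_zero]
      _ ≤ volume (Iic c ∩ Ioo 0 1) := by
          apply measure_mono; rintro t ⟨h1t, h2t⟩
          exact ⟨h2t.le, h1t, lt_of_lt_of_le h2t h1⟩

lemma vol_Ioc_inter {a b : ℝ} (h0 : 0 ≤ a) (h1 : b ≤ 1) :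
    volume (Ioc a b ∩ Ioo 0 1) = ENNReal.ofReal (b - a) := by
  apply le_antisymm
  · calc volume (Ioc a b ∩ Ioo 0 1) ≤ volume (Ioc a b) :=
          measure_mono inter_subset_left
      _ = ENNReal.ofReal (b - a) := Real.volume_Ioc
  · calc ENNReal.ofReal (b - a) = volume (Ioo a b) := (Real.volume_Ioo).symm
      _ ≤ volume (Ioc a b ∩ Ioo 0 1) := by
          apply measure_mono; rintro t ⟨h1t, h2t⟩
          exact ⟨⟨h1t, h2t.le⟩, lt_of_le_of_lt h0 h1t, lt_of_lt_of_le h2t h1⟩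

/-- The pushforward of Lebesgue measure on `(0,1)` by the quantile function is `μ`. -/
lemma map_Qf : (volume.restrict (Ioo 0 1)).map (Qf μ) = μ := by
  have hQ := aemeasurable_Qf μ
  refine Measure.ext_of_Iic _ _ (fun x => ?_)
  rw [Measure.map_apply_of_aemeasurable hQ measurableSet_Iic,
    Measure.restrict_apply' measurableSet_Ioo]
  have hset : Qf μ ⁻¹' Iic x ∩ Ioo 0 1 = Iic (cdf μ x) ∩ Ioo 0 1 := by
    ext t
    simp only [mem_inter_iff, mem_preimage, mem_Iic, and_congr_left_iff]
    intro ht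
    exact Qf_le_iff μ ht
  rw [hset, vol_Iic_inter (cdf_le_one μ x), ofReal_cdf]

lemma hasDerivAt_mul_abs (x : ℝ) : HasDerivAt (fun y : ℝ => y * |y|) (2 * |x|) x := by
  rcases lt_trichotomy x 0 with hx | hx | hx
  · have : HasDerivAt (fun y : ℝ => -(y * y)) (2 * |x|) x := by
      have := ((hasDerivAt_id x).fun_mul (hasDerivAt_id x)).fun_neg
      simpa [abs_of_neg hx, two_mul] using this
    apply this.congr_of_eventuallyEq
    filter_upwards [eventually_lt_nhds hx] with y hy
    rw [abs_of_neg hy]; ring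
  · subst hx
    rw [hasDerivAt_iff_isLittleO]
    simp only [abs_zero, mul_zero, sub_zero, zero_mul]
    rw [Asymptotics.isLittleO_iff]
    intro c hc
    filter_upwards [Metric.ball_mem_nhds (0:ℝ) hc] with y hy
    simp only [Metric.mem_ball, Real.dist_eq, sub_zero] at hy
    simp only [smul_eq_mul, mul_zero, sub_zero, Real.norm_eq_abs, abs_mul, abs_abs]
    nlinarith [abs_nonneg y]
  · have : HasDerivAt (fun y : ℝ => y * y) (2 * |x|) x := by
      have := (hasDerivAt_id x).fun_mul (hasDerivAt_id x)
      simpa [abs_of_pos hx, two_mul] using this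
    apply this.congr_of_eventuallyEq
    filter_upwards [eventually_gt_nhds hx] with y hy
    rw [abs_of_pos hy]

lemma integral_abs_Ico {m M : ℝ} (h : m ≤ M) :
    ∫ x in Ico m M, |x| = (M * |M| - m * |m|) / 2 := by
  rw [Measure.restrict_congr_set Ico_ae_eq_Ioc, ← intervalIntegral.integral_of_le h]
  have : ∫ x in m..M, |x| = (fun y : ℝ => y * |y| / 2) M - (fun y : ℝ => y * |y| / 2) m := by
    apply intervalIntegral.integral_eq_sub_of_hasDerivAt
    · intro x _
      simpa [div_eq_mul_inv, mul_comm] using (hasDerivAt_mul_abs x).div_const 2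
    · exact (continuous_abs.intervalIntegrable m M)
  rw [this]; ring

lemma key_ineq (a b : ℝ) :
    (a - b) ^ 2 ≤ 2 * ((a ⊔ b) * |a ⊔ b| - (a ⊓ b) * |a ⊓ b|) := by
  wlog hab : b ≤ a generalizing a b
  · have := this b a (le_of_not_ge hab)
    rw [sup_comm, inf_comm] at this
    nlinarith [this]
  rw [sup_eq_left.2 hab, inf_eq_right.2 hab]
  rcases le_or_gt 0 b with hb | hb
  · rw [abs_of_nonneg hb, abs_of_nonneg (hb.trans hab)]
    nlinarith
  · rw [abs_of_neg hb]
    rcases le_or_gt 0 a with ha | ha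
    · rw [abs_of_nonneg ha]; nlinarith [sq_nonneg (a+b)]
    · rw [abs_of_neg ha]; nlinarith

lemma bound_ineq (a b : ℝ) :
    2 * ((a ⊔ b) * |a ⊔ b| - (a ⊓ b) * |a ⊓ b|) ≤ 2 * (a ^ 2 + b ^ 2) := by
  have h1 : (a ⊔ b) * |a ⊔ b| ≤ (a ⊔ b) ^ 2 := by
    nlinarith [le_abs_self (a ⊔ b), abs_nonneg (a ⊔ b), sq_abs (a ⊔ b)]
  have h2 : -((a ⊓ b) * |a ⊓ b|) ≤ (a ⊓ b) ^ 2 := by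
    nlinarith [neg_abs_le (a ⊓ b), abs_nonneg (a ⊓ b), sq_abs (a ⊓ b)]
  have h3 : (a ⊔ b) ^ 2 + (a ⊓ b) ^ 2 = a ^ 2 + b ^ 2 := by
    rcases le_total a b with h | h
    · rw [sup_eq_right.2 h, inf_eq_left.2 h]; ring
    · rw [sup_eq_left.2 h, inf_eq_right.2 h]
  nlinarith

/-- Integral over `t ∈ (0,1)` of the difference of indicators `t ≤ c`, `t ≤ c'`. -/
lemma lintegral_diff_indicator (c c' : ℝ) (h0 : 0 ≤ c) (h1 : c ≤ 1) (h0' : 0 ≤ c')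
    (h1' : c' ≤ 1) :
    ∫⁻ t in Ioo (0:ℝ) 1,
        ENNReal.ofReal |(if t ≤ c then (1:ℝ) else 0) - (if t ≤ c' then 1 else 0)| =
      ENNReal.ofReal |c - c'| := by
  have hfun : (fun t : ℝ =>
      ENNReal.ofReal |(if t ≤ c then (1:ℝ) else 0) - (if t ≤ c' then 1 else 0)|) =
      (Ioc (c ⊓ c') (c ⊔ c')).indicator 1 := by
    funext t
    rw [indicator_apply]
    by_cases h1t : t ≤ c <;> by_cases h2t : t ≤ c' <;>
      simp only [h1t, h2t, if_true, if_false, mem_Ioc, Pi.one_apply]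
    · rw [if_neg]
      · simp
      · rintro ⟨ht, _⟩
        exact absurd (le_inf h1t h2t) (not_le.2 ht)
    · rw [if_pos]
      · simp
      · exact ⟨lt_of_le_of_lt inf_le_right (not_le.1 h2t), h1t.trans le_sup_left⟩
    · rw [if_pos]
      · simp
      · exact ⟨lt_of_le_of_lt inf_le_left (not_le.1 h1t), h2t.trans le_sup_right⟩
    · rw [if_neg]
      · simp
      · rintro ⟨_, ht⟩
        rcases le_total c c' with h | h
        · rw [sup_eq_right.2 h] at ht; exact h2t ht
        · rw [sup_eq_left.2 h] at ht; exact h1t ht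
  rw [hfun, lintegral_indicator_one measurableSet_Ioc,
    Measure.restrict_apply' measurableSet_Ioo,
    vol_Ioc_inter (le_inf h0 h0') (sup_le h1 h1'), max_sub_min_eq_abs, abs_sub_comm]

end Aux

open Set Filter ProbabilityTheory
open scoped Topology ENNReal

/-- One-dimensional upper bound for the squared 2-Wasserstein distance in terms of
cumulative distribution functions. -/
theorem stmt_5 (μ ν : Measure ℝ) [IsProbabilityMeasure μ] [IsProbabilityMeasure ν]
    (hμ : Integrable (fun x => x ^ 2) μ) (hν : Integrable (fun x => x ^ 2) ν) :
    (W2 μ ν) ^ 2 ≤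
      4 * ∫ x : ℝ, |x| * |(μ (Set.Iic x)).toReal - (ν (Set.Iic x)).toReal| := by
  classical
  set F : ℝ → ℝ := fun x => cdf μ x with hF_def
  set G : ℝ → ℝ := fun x => cdf ν x with hG_def
  have hFmeas : Measurable F := (monotone_cdf μ).measurable
  have hGmeas : Measurable G := (monotone_cdf ν).measurable
  set ρ : Measure ℝ := volume.restrict (Ioo 0 1) with hρ_def
  have hρ_prob : IsProbabilityMeasure ρ := by
    constructor
    rw [hρ_def, Measure.restrict_apply' measurableSet_Ioo, univ_inter, Real.volume_Ioo]
    norm_num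
  have hQμ := aemeasurable_Qf μ
  have hQν := aemeasurable_Qf ν
  -- The difference-of-indicators function
  set E : ℝ → ℝ → ℝ := fun t x =>
    |(if t ≤ F x then (1:ℝ) else 0) - (if t ≤ G x then 1 else 0)| with hE_def
  -- Joint measurability
  have hEmeas : Measurable (fun p : ℝ × ℝ => ENNReal.ofReal (4 * (|p.2| * E p.1 p.2))) := by
    have h1 : Measurable fun p : ℝ × ℝ => (if p.1 ≤ F p.2 then (1:ℝ) else 0) :=
      Measurable.ite (measurableSet_le measurable_fst (hFmeas.comp measurable_snd))
        measurable_const measurable_const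
    have h2 : Measurable fun p : ℝ × ℝ => (if p.1 ≤ G p.2 then (1:ℝ) else 0) :=
      Measurable.ite (measurableSet_le measurable_fst (hGmeas.comp measurable_snd))
        measurable_const measurable_const
    exact (measurable_const.mul ((measurable_snd.abs).mul ((h1.sub h2).abs))).ennreal_ofReal
  -- Step A : pointwise evaluation of the inner x-integral
  have stepA : ∀ t ∈ Ioo (0:ℝ) 1,
      ∫⁻ x, ENNReal.ofReal (4 * (|x| * E t x)) =
        ENNReal.ofReal (2 * ((Qf μ t ⊔ Qf ν t) * |Qf μ t ⊔ Qf ν t| -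
          (Qf μ t ⊓ Qf ν t) * |Qf μ t ⊓ Qf ν t|)) := by
    intro t ht
    set a := Qf μ t
    set b := Qf ν t
    have hE_ind : ∀ x, E t x = (Ico (a ⊓ b) (a ⊔ b)).indicator (fun _ => (1:ℝ)) x := by
      intro x
      have hFx : (t ≤ F x) ↔ a ≤ x := (Qf_le_iff μ ht).symm
      have hGx : (t ≤ G x) ↔ b ≤ x := (Qf_le_iff ν ht).symm
      simp only [hE_def]
      by_cases hax : a ≤ x <;> by_cases hbx : b ≤ x
      · rw [if_pos (hFx.mpr hax), if_pos (hGx.mpr hbx), indicator_apply, if_neg]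
        · simp
        · rintro ⟨_, hx⟩
          exact absurd (sup_le hax hbx) (not_le.2 hx)
      · rw [if_pos (hFx.mpr hax), if_neg (fun h => hbx (hGx.mp h)), indicator_apply,
          if_pos ⟨inf_le_left.trans hax, lt_of_lt_of_le (not_le.1 hbx) le_sup_right⟩]
        simp
      · rw [if_neg (fun h => hax (hFx.mp h)), if_pos (hGx.mpr hbx), indicator_apply,
          if_pos ⟨inf_le_right.trans hbx, lt_of_lt_of_le (not_le.1 hax) le_sup_left⟩]
        simp
      · rw [if_neg (fun h => hax (hFx.mp h)), if_neg (fun h => hbx (hGx.mp h)),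
          indicator_apply, if_neg]
        · simp
        · rintro ⟨hx, _⟩
          rcases le_total a b with h | h
          · rw [inf_eq_left.2 h] at hx; exact hax hx
          · rw [inf_eq_right.2 h] at hx; exact hbx hx
    have hfun : (fun x => ENNReal.ofReal (4 * (|x| * E t x))) =
        (Ico (a ⊓ b) (a ⊔ b)).indicator (fun x => ENNReal.ofReal (4 * |x|)) := by
      funext x
      rw [hE_ind x]
      by_cases hx : x ∈ Ico (a ⊓ b) (a ⊔ b)
      · rw [indicator_of_mem hx, indicator_of_mem hx, mul_one]
      · rw [indicator_of_notMem hx, indicator_of_notMem hx, mul_zero, mul_zero,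
          ENNReal.ofReal_zero]
    rw [hfun, lintegral_indicator measurableSet_Ico]
    have hint : IntegrableOn (fun x => 4 * |x|) (Ico (a ⊓ b) (a ⊔ b)) volume := by
      exact ((continuous_const.mul continuous_abs).integrableOn_Icc).mono_set
        Ico_subset_Icc_self
    rw [← ofReal_integral_eq_lintegral_ofReal hint
      (Filter.Eventually.of_forall fun x => by positivity)]
    congr 1
    rw [integral_const_mul, integral_abs_Ico inf_le_sup]
    ring
  -- Tonelli swap
  have hswap :
      ∫⁻ t, (∫⁻ x, ENNReal.ofReal (4 * (|x| * E t x))) ∂ρ =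
        ∫⁻ x, (∫⁻ t, ENNReal.ofReal (4 * (|x| * E t x)) ∂ρ) := by
    exact lintegral_lintegral_swap (hEmeas.aemeasurable)
  -- Inner t-integral
  have hinner : ∀ x : ℝ,
      ∫⁻ t, ENNReal.ofReal (4 * (|x| * E t x)) ∂ρ =
        4 * ENNReal.ofReal (|x| * |F x - G x|) := by
    intro x
    have h4 : (0:ℝ) ≤ 4 * |x| := by positivity
    have : ∀ t : ℝ, ENNReal.ofReal (4 * (|x| * E t x)) =
        ENNReal.ofReal (4 * |x|) * ENNReal.ofReal (E t x) := by
      intro t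
      rw [← ENNReal.ofReal_mul h4, mul_assoc]
    simp_rw [this]
    rw [lintegral_const_mul' _ _ ENNReal.ofReal_ne_top, hρ_def]
    have := lintegral_diff_indicator (F x) (G x) (cdf_nonneg μ x) (cdf_le_one μ x)
      (cdf_nonneg ν x) (cdf_le_one ν x)
    rw [hE_def]
    simp only [] at this ⊢
    rw [this, ← ENNReal.ofReal_mul h4, mul_assoc,
      ENNReal.ofReal_mul (by norm_num : (0:ℝ) ≤ (4:ℝ))]
    norm_num
  -- Key quantities
  set K : ℝ≥0∞ := ∫⁻ x, ENNReal.ofReal (|x| * |F x - G x|) with hK_def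
  set L : ℝ≥0∞ := ∫⁻ t, ENNReal.ofReal ((Qf μ t - Qf ν t) ^ 2) ∂ρ with hL_def
  have htot : ∫⁻ t, (∫⁻ x, ENNReal.ofReal (4 * (|x| * E t x))) ∂ρ = 4 * K := by
    rw [hswap]
    simp_rw [hinner]
    rw [lintegral_const_mul' _ _ (by norm_num : (4:ℝ≥0∞) ≠ ⊤), hK_def]
  -- L ≤ 4K
  have hL_le : L ≤ 4 * K := by
    rw [hL_def, ← htot]
    apply lintegral_mono_ae
    filter_upwards [ae_restrict_mem measurableSet_Ioo] with t ht
    rw [stepA t ht]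
    exact ENNReal.ofReal_le_ofReal (key_ineq _ _)
  -- 4K < ∞
  have hQsq : ∀ (σ : Measure ℝ) [IsProbabilityMeasure σ], Integrable (fun x => x ^ 2) σ →
      ∫⁻ t, ENNReal.ofReal ((Qf σ t) ^ 2) ∂ρ < ⊤ := by
    intro σ _ hσ
    have hmap : ∫⁻ t, ENNReal.ofReal ((Qf σ t) ^ 2) ∂ρ =
        ∫⁻ x, ENNReal.ofReal (x ^ 2) ∂σ := by
      conv_rhs => rw [← map_Qf σ]
      rw [lintegral_map' (by fun_prop) (aemeasurable_Qf σ)]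
    rw [hmap]
    rw [← hasFiniteIntegral_iff_ofReal (Filter.Eventually.of_forall fun x => sq_nonneg x)]
    exact hσ.hasFiniteIntegral
  have hK_top : 4 * K ≠ ⊤ := by
    have hb : 4 * K ≤ ∫⁻ t, (ENNReal.ofReal (2 * ((Qf μ t) ^ 2 + (Qf ν t) ^ 2))) ∂ρ := by
      rw [← htot]
      apply lintegral_mono_ae
      filter_upwards [ae_restrict_mem measurableSet_Ioo] with t ht
      rw [stepA t ht]
      exact ENNReal.ofReal_le_ofReal (bound_ineq _ _)
    have hfin : ∫⁻ t, (ENNReal.ofReal (2 * ((Qf μ t) ^ 2 + (Qf ν t) ^ 2))) ∂ρ < ⊤ := by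
      have heq : ∀ t : ℝ, ENNReal.ofReal (2 * ((Qf μ t) ^ 2 + (Qf ν t) ^ 2)) =
          2 * (ENNReal.ofReal ((Qf μ t) ^ 2) + ENNReal.ofReal ((Qf ν t) ^ 2)) := by
        intro t
        rw [ENNReal.ofReal_mul (by norm_num : (0:ℝ) ≤ 2),
          ENNReal.ofReal_add (sq_nonneg _) (sq_nonneg _)]
        norm_num
      simp_rw [heq]
      rw [lintegral_const_mul' _ _ (by norm_num : (2:ℝ≥0∞) ≠ ⊤),
        lintegral_add_left' ((aemeasurable_Qf μ).pow_const 2).ennreal_ofReal]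
      have h1 := hQsq μ hμ
      have h2 := hQsq ν hν
      exact ENNReal.mul_lt_top (by norm_num) (ENNReal.add_lt_top.2 ⟨h1, h2⟩)
    exact (lt_of_le_of_lt hb hfin).ne
  -- g is integrable and its integral is K.toReal
  set g : ℝ → ℝ := fun x => |x| * |F x - G x| with hg_def
  have hgmeas : Measurable g := (measurable_abs).mul ((hFmeas.sub hGmeas).abs)
  have hg_nonneg : ∀ x, 0 ≤ g x := fun x => by positivity
  have hK_ne : K ≠ ⊤ := by
    intro h
    rw [h] at hK_top
    simp at hK_top
  have hg_int : Integrable g volume := by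
    constructor
    · exact hgmeas.aestronglyMeasurable
    · rw [hasFiniteIntegral_iff_ofReal (Filter.Eventually.of_forall hg_nonneg)]
      exact lt_of_le_of_ne le_top hK_ne
  have hg_eq : ∫ x, g x = K.toReal := by
    rw [integral_eq_lintegral_of_nonneg_ae (Filter.Eventually.of_forall hg_nonneg)
      hgmeas.aestronglyMeasurable, hK_def]
  -- The transport cost
  set I : ℝ := ∫ t, (Qf μ t - Qf ν t) ^ 2 ∂ρ with hI_def
  have hsub_meas : AEStronglyMeasurable (fun t => (Qf μ t - Qf ν t) ^ 2) ρ :=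
    (((hQμ.sub hQν).pow_const 2)).aestronglyMeasurable
  have hI_eq : I = L.toReal := by
    rw [hI_def, integral_eq_lintegral_of_nonneg_ae
      (Filter.Eventually.of_forall fun t => sq_nonneg _) hsub_meas, hL_def]
  -- Construct the coupling
  set π : Measure (ℝ × ℝ) := ρ.map (fun t => (Qf μ t, Qf ν t)) with hπ_def
  have hpair : AEMeasurable (fun t => (Qf μ t, Qf ν t)) ρ := hQμ.prodMk hQν
  have hmarg1 : π.map Prod.fst = μ := by
    rw [hπ_def, AEMeasurable.map_map_of_aemeasurable measurable_fst.aemeasurable hpair]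
    exact map_Qf μ
  have hmarg2 : π.map Prod.snd = ν := by
    rw [hπ_def, AEMeasurable.map_map_of_aemeasurable measurable_snd.aemeasurable hpair]
    exact map_Qf ν
  have hI_mem : I ∈ {r : ℝ | ∃ π : Measure (ℝ × ℝ), π.map Prod.fst = μ ∧
      π.map Prod.snd = ν ∧ r = ∫ p, ‖p.1 - p.2‖ ^ 2 ∂π} := by
    refine ⟨π, hmarg1, hmarg2, ?_⟩
    rw [hπ_def, integral_map hpair]
    · rw [hI_def]
      congr 1
      funext t
      rw [Real.norm_eq_abs, sq_abs]
    · exact (continuous_fst.sub continuous_snd).norm.pow 2 |>.aestronglyMeasurable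
  -- W2sq properties
  have hW2sq_lb : ∀ r ∈ {r : ℝ | ∃ π : Measure (ℝ × ℝ), π.map Prod.fst = μ ∧
      π.map Prod.snd = ν ∧ r = ∫ p, ‖p.1 - p.2‖ ^ 2 ∂π}, 0 ≤ r := by
    rintro r ⟨π', _, _, rfl⟩
    exact integral_nonneg fun p => by positivity
  have hW2sq_nonneg : 0 ≤ W2sq μ ν := Real.sInf_nonneg hW2sq_lb
  have hW2sq_le : W2sq μ ν ≤ I := csInf_le ⟨0, hW2sq_lb⟩ hI_mem
  -- Final chain
  have hRHS : ∫ x : ℝ, |x| * |(μ (Set.Iic x)).toReal - (ν (Set.Iic x)).toReal| = K.toReal := by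
    rw [← hg_eq]
    congr 1
    funext x
    rw [hg_def]
    simp only [hF_def, hG_def, cdf_eq_real, measureReal_def]
  rw [W2, Real.sq_sqrt hW2sq_nonneg, hRHS]
  calc W2sq μ ν ≤ I := hW2sq_le
    _ = L.toReal := hI_eq
    _ ≤ (4 * K).toReal := ENNReal.toReal_mono hK_top hL_le
    _ = 4 * K.toReal := by rw [ENNReal.toReal_mul]; norm_num
end
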